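/- Let u : (0,∞) → ℝ with u > 0 everywhere, and let v : (0,∞) → ℝ be continuous. Suppose there exists r₀ ∈ (0,∞) such that v(r) ≥ 0 for r ∈ (0, r₀) and v(r) < 0 for r ∈ (r₀, 1), and suppose the weight w(r) = r^{-k} u(r)^{p-2} (with p > 2, k > 0) is strictly decreasing in r, and ∫₀¹ u(r) v(r) rᴺ⁻¹ dr = 0 where the integral converges absolutely and v is not identically zero. Then ∫₀¹ r^{-k} u(r)^{p-1} v(r) rᴺ⁻¹ dr > 0. -/
import Mathlib


open Set MeasureTheory

/-- weighted integral comparison. If u > 0, v changes sign once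
from + to − at r₀ ∈ (0,1), the weight w(r) = r^{-k} u(r)^{p-2} is strictly
decreasing, and ∫₀¹ u v r^{N-1} dr = 0 with v not identically zero, then
∫₀¹ r^{-k} u^{p-1} v r^{N-1} dr > 0. -/
theorem stmt5 (u v : ℝ → ℝ) (N : ℕ) (p k : ℝ) (hN : 1 ≤ N)
    (hp : 2 < p) (hk : 0 < k)
    (hu : ∀ r > (0:ℝ), 0 < u r)
    (hv : ContinuousOn v (Ioo 0 1))
    (r₀ : ℝ) (hr₀ : r₀ ∈ Ioo (0:ℝ) 1)
    (hv1 : ∀ r ∈ Ioo (0:ℝ) r₀, 0 ≤ v r)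
    (hv2 : ∀ r ∈ Ioo r₀ (1:ℝ), v r < 0)
    (hw : StrictAntiOn (fun r => r ^ (-k) * u r ^ (p - 2)) (Ioi 0))
    (hint : IntegrableOn (fun r => u r * v r * r ^ ((N:ℝ) - 1)) (Ioo 0 1))
    (hwint : IntegrableOn
      (fun r => r ^ (-k) * u r ^ (p - 1) * v r * r ^ ((N:ℝ) - 1)) (Ioo 0 1))
    (hzero : ∫ r in Ioo (0:ℝ) 1, u r * v r * r ^ ((N:ℝ) - 1) = 0)
    (hnz : ∃ r ∈ Ioo (0:ℝ) 1, v r ≠ 0) :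
    0 < ∫ r in Ioo (0:ℝ) 1, r ^ (-k) * u r ^ (p - 1) * v r * r ^ ((N:ℝ) - 1) := by
  set W : ℝ → ℝ := fun r => r ^ (-k) * u r ^ (p - 2) with hWdef
  set f : ℝ → ℝ := fun r => u r * v r * r ^ ((N:ℝ) - 1) with hfdef
  set g : ℝ → ℝ := fun r => (W r - W r₀) * f r with hgdef
  -- pointwise identity on (0,1)
  have hEq : EqOn (fun r => r ^ (-k) * u r ^ (p - 1) * v r * r ^ ((N:ℝ) - 1))
      (fun r => W r * f r) (Ioo 0 1) := by
    intro r hr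
    have hur : 0 < u r := hu r hr.1
    have h1 : u r ^ (p - 1) = u r ^ (p - 2) * u r := by
      rw [← Real.rpow_add_one hur.ne' (p - 2)]
      congr 1; ring
    simp only [W, f, h1]
    ring
  have hWf : IntegrableOn (fun r => W r * f r) (Ioo 0 1) :=
    hwint.congr_fun hEq measurableSet_Ioo
  have hg_int : IntegrableOn g (Ioo 0 1) := by
    have h : IntegrableOn (fun r => W r * f r - W r₀ * f r) (Ioo 0 1) :=
      hWf.sub (hint.const_mul (W r₀))
    exact h.congr_fun (fun r _ => by simp only [g]; ring) measurableSet_Ioo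
  -- sign facts
  have hfpos : ∀ r ∈ Ioo (0:ℝ) 1, r₀ < r → f r < 0 := by
    intro r hr hrr
    have hrp : (0:ℝ) < r ^ ((N:ℝ) - 1) := Real.rpow_pos_of_pos hr.1 _
    have := hv2 r ⟨hrr, hr.2⟩
    exact mul_neg_of_neg_of_pos (mul_neg_of_pos_of_neg (hu r hr.1) this) hrp
  have hgpos : ∀ r ∈ Ioo r₀ (1:ℝ), 0 < g r := by
    intro r hr
    have hr01 : r ∈ Ioo (0:ℝ) 1 := ⟨hr₀.1.trans hr.1, hr.2⟩
    have hWlt : W r < W r₀ := hw hr₀.1 hr01.1 hr.1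
    exact mul_pos_of_neg_of_neg (by linarith) (hfpos r hr01 hr.1)
  have hgnonneg : ∀ r ∈ Ioo (0:ℝ) 1, 0 ≤ g r := by
    intro r hr
    rcases lt_trichotomy r r₀ with h | h | h
    · have hWgt : W r₀ < W r := hw hr.1 hr₀.1 h
      have hfnn : 0 ≤ f r := by
        have hrp : (0:ℝ) ≤ r ^ ((N:ℝ) - 1) := (Real.rpow_pos_of_pos hr.1 _).le
        exact mul_nonneg (mul_nonneg (hu r hr.1).le (hv1 r ⟨hr.1, h⟩)) hrp
      exact mul_nonneg (by linarith) hfnn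
    · simp [g, h]
    · exact (hgpos r ⟨h, hr.2⟩).le
  -- ∫ W f = ∫ g
  have hsplit : ∫ r in Ioo (0:ℝ) 1, W r * f r = ∫ r in Ioo (0:ℝ) 1, g r := by
    have h1 : ∫ r in Ioo (0:ℝ) 1, W r * f r
        = ∫ r in Ioo (0:ℝ) 1, (g r + W r₀ * f r) := by
      apply setIntegral_congr_fun measurableSet_Ioo
      intro r _; simp only [g]; ring
    rw [h1, integral_add hg_int (hint.const_mul _), integral_const_mul, hzero,
      mul_zero, add_zero]
  have hgI : 0 < ∫ r in Ioo (0:ℝ) 1, g r := by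
    rw [setIntegral_pos_iff_support_of_nonneg_ae ?_ hg_int]
    · refine lt_of_lt_of_le ?_ (measure_mono (show Ioo r₀ 1 ⊆
        Function.support g ∩ Ioo 0 1 from fun r hr =>
          ⟨(hgpos r hr).ne', ⟨hr₀.1.trans hr.1, hr.2⟩⟩))
      rw [Real.volume_Ioo]
      exact ENNReal.ofReal_pos.mpr (by linarith [hr₀.2])
    · filter_upwards [ae_restrict_mem measurableSet_Ioo] with r hr
        using hgnonneg r hr
  calc (0:ℝ) < ∫ r in Ioo (0:ℝ) 1, g r := hgI
    _ = ∫ r in Ioo (0:ℝ) 1, W r * f r := hsplit.symm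
    _ = _ := (setIntegral_congr_fun measurableSet_Ioo hEq).symm
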